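/- arXiv:1707.04726 — 2 statements merged into one kernel-verified Lean document; each statement's English description precedes it below -/
import Mathlib

section
/- Let w be a weight with M_w < ∞ and let T : ℓ¹ → ℓ¹ be the continuous linear operator satisfying (T x)(n) = (w(n)/n) ∑_{k=1}^n x(k)/w(k) for all x ∈ ℓ¹ and n ≥ 1. Then: (i) T is power bounded (sup_{m≥1} ‖T^m‖ < ∞) if and only if for every x ∈ ℓ¹ the sequence (T^m x)_{m≥1} converges in ℓ¹; in that case the limit P x satisfies T(P x) = P x and x − P x lies in the closure of the range of I − T (so the iterates converge in the strong operator topology to the projection onto ker(I − T) along the closure of (I − T)(ℓ¹)), and in particular T is mean ergodic. (ii) T is mean ergodic (for every x ∈ ℓ¹ the Cesàro averages (1/n) ∑_{m=1}^n T^m x converge in ℓ¹ as n → ∞) if and only if T is Cesàro bounded (sup_{n≥1} ‖(1/n) ∑_{m=1}^n T^m‖ < ∞). -/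
/- STATEMENT 16: For the transferred Cesàro operator T on ℓ¹:
(i) T is power bounded iff the iterates T^m converge in the strong operator topology; in that
case the limit P satisfies T(Px) = Px and x − Px ∈ closure(range(I − T)), and T is mean ergodic;
(ii) T is mean ergodic iff T is Cesàro bounded.
Index `n : ℕ` corresponds to the paper's `n+1`. -/

open Filter Topology Finset
open scoped ENNReal NNReal

noncomputable section

abbrev ellOne : Type := lp (fun _ : ℕ => ℂ) 1

def IsCesaroOp (v w : ℕ → ℝ) (T : ellOne →L[ℂ] ellOne) : Prop :=
  ∀ (x : ellOne) (n : ℕ),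
    (T x : ∀ _ : ℕ, ℂ) n
      = ((w n / (n + 1) : ℝ) : ℂ) * ∑ k ∈ Finset.range (n + 1), (x : ∀ _ : ℕ, ℂ) k / ((v k : ℝ) : ℂ)

def Mvw (v w : ℕ → ℝ) : ENNReal :=
  ⨆ n : ℕ, ENNReal.ofReal (1 / v n) * ∑' k : ℕ, ENNReal.ofReal (w (n + k) / (n + k + 1))

def CesaroBounded (T : ellOne →L[ℂ] ellOne) : Prop :=
  ∃ C : ℝ, ∀ n : ℕ, 1 ≤ n → ‖((n : ℂ))⁻¹ • ∑ m ∈ Finset.Icc 1 n, T ^ m‖ ≤ C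

def PowerBounded (T : ellOne →L[ℂ] ellOne) : Prop :=
  ∃ C : ℝ, ∀ m : ℕ, 1 ≤ m → ‖T ^ m‖ ≤ C

def MeanErgodic (T : ellOne →L[ℂ] ellOne) : Prop :=
  ∀ x : ellOne, ∃ y : ellOne,
    Tendsto (fun n : ℕ => ((n : ℂ))⁻¹ • ∑ m ∈ Finset.Icc 1 n, (T ^ m) x) atTop (nhds y)

/-- Entries of powers of the Cesàro matrix: `cc m j n = (C^m)_{n,j}` (0-indexed). -/
def cc : ℕ → ℕ → ℕ → ℝ
  | 0, j, n => if n = j then 1 else 0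
  | (m+1), j, n => ((n:ℝ)+1)⁻¹ * ∑ k ∈ Finset.range (n+1), cc m j k

lemma cc_nonneg : ∀ m j n, 0 ≤ cc m j n := by
  intro m
  induction m with
  | zero => intro j n; simp only [cc]; positivity
  | succ m ih =>
    intro j n
    simp only [cc]
    have : 0 ≤ ∑ k ∈ Finset.range (n+1), cc m j k :=
      Finset.sum_nonneg fun k _ => ih j k
    positivity

lemma cc_sum_le (j : ℕ) (hj : 1 ≤ j) :
    ∀ M n, ∑ m ∈ Finset.range M, cc (m+1) j n ≤ (if j ≤ n then 1/(j:ℝ) else 0) := by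
  have hj0 : (0:ℝ) < j := by exact_mod_cast hj
  intro M
  induction M with
  | zero =>
    intro n
    simp only [Finset.range_zero, Finset.sum_empty]
    split <;> positivity
  | succ M ih =>
    intro n
    have swap : ∑ m ∈ Finset.range (M+1), cc (m+1) j n
        = ((n:ℝ)+1)⁻¹ * ∑ k ∈ Finset.range (n+1), ∑ m ∈ Finset.range (M+1), cc m j k := by
      simp only [cc, ← Finset.mul_sum]
      rw [Finset.sum_comm]
    rw [swap]
    have inner_le : ∀ k, ∑ m ∈ Finset.range (M+1), cc m j k
        ≤ (if k = j then (1:ℝ) else 0) + (if j ≤ k then 1/(j:ℝ) else 0) := by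
      intro k
      rw [Finset.sum_range_succ']
      have h0 : cc 0 j k = (if k = j then (1:ℝ) else 0) := rfl
      rw [h0, add_comm]
      exact add_le_add le_rfl (ih k)
    have hsum_le : ∑ k ∈ Finset.range (n+1), ∑ m ∈ Finset.range (M+1), cc m j k
        ≤ ∑ k ∈ Finset.range (n+1),
            ((if k = j then (1:ℝ) else 0) + (if j ≤ k then 1/(j:ℝ) else 0)) :=
      Finset.sum_le_sum fun k _ => inner_le k
    by_cases hjn : j ≤ n
    · have hδ : ∑ k ∈ Finset.range (n+1), (if k = j then (1:ℝ) else 0) = 1 := by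
        rw [Finset.sum_ite_eq' (Finset.range (n+1)) j (fun _ => (1:ℝ))]
        simp [Nat.lt_succ_iff.mpr hjn]
      have hι : ∑ k ∈ Finset.range (n+1), (if j ≤ k then 1/(j:ℝ) else 0)
          = ((n+1-j : ℕ) : ℝ) * (1/(j:ℝ)) := by
        rw [Finset.sum_ite, Finset.sum_const_zero, add_zero, Finset.sum_const]
        have : Finset.filter (fun k => j ≤ k) (Finset.range (n+1)) = Finset.Ico j (n+1) := by
          ext k; simp [Finset.mem_Ico, and_comm]
        rw [this, Nat.card_Ico]
        simp
      rw [Finset.sum_add_distrib, hδ, hι] at hsum_le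
      have hcast : ((n+1-j : ℕ) : ℝ) = (n:ℝ) + 1 - (j:ℝ) := by
        have : j ≤ n + 1 := le_trans hjn (Nat.le_succ n)
        push_cast [Nat.cast_sub this]
        ring
      rw [hcast] at hsum_le
      have hn1 : (0:ℝ) < (n:ℝ) + 1 := by positivity
      calc ((n:ℝ)+1)⁻¹ * ∑ k ∈ Finset.range (n+1), ∑ m ∈ Finset.range (M+1), cc m j k
          ≤ ((n:ℝ)+1)⁻¹ * (1 + ((n:ℝ) + 1 - (j:ℝ)) * (1/(j:ℝ))) := by
            exact mul_le_mul_of_nonneg_left hsum_le (by positivity)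
        _ = 1/(j:ℝ) := by field_simp; ring
        _ = (if j ≤ n then 1/(j:ℝ) else 0) := by rw [if_pos hjn]
    · -- j > n : everything vanishes
      have : ∀ k ∈ Finset.range (n+1),
          ((if k = j then (1:ℝ) else 0) + (if j ≤ k then 1/(j:ℝ) else 0)) = 0 := by
        intro k hk
        have hk' : k < n + 1 := Finset.mem_range.mp hk
        have h1 : k ≠ j := by omega
        have h2 : ¬ j ≤ k := by omega
        simp [h1, h2]
      rw [Finset.sum_congr rfl this] at hsum_le
      simp only [Finset.sum_const_zero] at hsum_le
      have hge : 0 ≤ ∑ k ∈ Finset.range (n+1), ∑ m ∈ Finset.range (M+1), cc m j k :=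
        Finset.sum_nonneg fun k _ => Finset.sum_nonneg fun m _ => cc_nonneg m j k
      have : ((n:ℝ)+1)⁻¹ * ∑ k ∈ Finset.range (n+1), ∑ m ∈ Finset.range (M+1), cc m j k ≤ 0 := by
        have := mul_le_mul_of_nonneg_left hsum_le (show (0:ℝ) ≤ ((n:ℝ)+1)⁻¹ by positivity)
        simpa using this
      rw [if_neg hjn]
      exact this

lemma cc_le_one : ∀ m n, cc m 0 n ≤ 1 := by
  intro m
  induction m with
  | zero => intro n; simp only [cc]; split <;> norm_num
  | succ m ih =>
    intro n
    simp only [cc]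
    have : ∑ k ∈ Finset.range (n+1), cc m 0 k ≤ ∑ k ∈ Finset.range (n+1), 1 :=
      Finset.sum_le_sum fun k _ => ih k
    simp only [Finset.sum_const, Finset.card_range, smul_eq_mul, mul_one] at this
    have hn1 : (0:ℝ) < (n:ℝ) + 1 := by positivity
    rw [inv_mul_le_iff₀ hn1]
    simpa using this

lemma cc_ge : ∀ (m n : ℕ), 1 - ((n:ℝ)/((n:ℝ)+1))^(m+1) ≤ cc (m+1) 0 n := by
  intro m
  induction m with
  | zero =>
    intro n
    have hn1 : (0:ℝ) < (n:ℝ) + 1 := by positivity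
    have h1 : cc 1 0 n = ((n:ℝ)+1)⁻¹ := by
      simp only [cc]
      have h0 : ∑ k ∈ Finset.range (n+1), (if k = 0 then (1:ℝ) else 0) = 1 := by
        rw [Finset.sum_ite_eq' (Finset.range (n+1)) 0 (fun _ => (1:ℝ))]
        simp
      rw [h0, mul_one]
    rw [h1, pow_one]
    have hne : ((n:ℝ)+1) ≠ 0 := ne_of_gt hn1
    rw [div_eq_mul_inv, sub_le_iff_le_add]
    have : ((n:ℝ)+1) * ((n:ℝ)+1)⁻¹ = 1 := mul_inv_cancel₀ hne
    nlinarith [this]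
  | succ m ih =>
    intro n
    have hn1 : (0:ℝ) < (n:ℝ) + 1 := by positivity
    have step : cc (m+2) 0 n = ((n:ℝ)+1)⁻¹ * ∑ k ∈ Finset.range (n+1), cc (m+1) 0 k := rfl
    have hlow : ∑ k ∈ Finset.range (n+1), (1 - ((k:ℝ)/((k:ℝ)+1))^(m+1))
        ≤ ∑ k ∈ Finset.range (n+1), cc (m+1) 0 k :=
      Finset.sum_le_sum fun k _ => ih k
    have hr : ∑ k ∈ Finset.range (n+1), ((k:ℝ)/((k:ℝ)+1))^(m+1)
        ≤ (n:ℝ) * ((n:ℝ)/((n:ℝ)+1))^(m+1) := by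
      rw [Finset.sum_range_succ']
      simp only [Nat.cast_zero, zero_div, zero_pow (Nat.succ_ne_zero m), add_zero]
      have : ∀ k ∈ Finset.range n, (((k+1:ℕ):ℝ)/(((k+1:ℕ):ℝ)+1))^(m+1)
          ≤ ((n:ℝ)/((n:ℝ)+1))^(m+1) := by
        intro k hk
        have hkn : (k:ℕ) + 1 ≤ n := Nat.succ_le_of_lt (Finset.mem_range.mp hk)
        apply pow_le_pow_left₀ (by positivity)
        rw [div_le_div_iff₀ (by positivity) hn1]
        have h1 : ((k:ℝ)+1) ≤ (n:ℝ) := by exact_mod_cast hkn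
        push_cast
        nlinarith
      have hle : ∑ k ∈ Finset.range n, (((k+1:ℕ):ℝ)/(((k+1:ℕ):ℝ)+1))^(m+1)
          ≤ ∑ k ∈ Finset.range n, ((n:ℝ)/((n:ℝ)+1))^(m+1) :=
        Finset.sum_le_sum this
      rw [Finset.sum_const, Finset.card_range] at hle
      refine le_trans (le_of_eq ?_) (by simpa using hle)
      apply Finset.sum_congr rfl
      intro k _
      push_cast
      ring_nf
    rw [step]
    have expand : ∑ k ∈ Finset.range (n+1), (1 - ((k:ℝ)/((k:ℝ)+1))^(m+1))
        = ((n:ℝ)+1) - ∑ k ∈ Finset.range (n+1), ((k:ℝ)/((k:ℝ)+1))^(m+1) := by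
      rw [Finset.sum_sub_distrib, Finset.sum_const, Finset.card_range]
      push_cast; ring
    have key : ((n:ℝ)+1) - (n:ℝ) * ((n:ℝ)/((n:ℝ)+1))^(m+1)
        ≤ ∑ k ∈ Finset.range (n+1), cc (m+1) 0 k := by
      refine le_trans ?_ hlow
      rw [expand]
      linarith [hr]
    have : ((n:ℝ)+1)⁻¹ * (((n:ℝ)+1) - (n:ℝ) * ((n:ℝ)/((n:ℝ)+1))^(m+1))
        ≤ ((n:ℝ)+1)⁻¹ * ∑ k ∈ Finset.range (n+1), cc (m+1) 0 k :=
      mul_le_mul_of_nonneg_left key (by positivity)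
    refine le_trans (le_of_eq ?_) this
    have hne : ((n:ℝ)+1) ≠ 0 := ne_of_gt hn1
    rw [mul_sub, inv_mul_cancel₀ hne, ← mul_assoc, inv_mul_eq_div]
    ring


def ee (j : ℕ) : ellOne := lp.single 1 j (1:ℂ)

lemma hasSum_norm1 (f : ellOne) : HasSum (fun n => ‖(f : ∀ _ : ℕ, ℂ) n‖) ‖f‖ := by
  have := lp.hasSum_norm (p := 1) (by norm_num) f
  simpa using this

lemma coord_pow (w : ℕ → ℝ) (hw : ∀ n, 0 < w n) (T : ellOne →L[ℂ] ellOne)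
    (hT : IsCesaroOp w w T) :
    ∀ (m j n : ℕ), ((T ^ m) (ee j) : ∀ _ : ℕ, ℂ) n = (((w n / w j) * cc m j n : ℝ) : ℂ) := by
  intro m
  induction m with
  | zero =>
    intro j n
    rw [pow_zero, ContinuousLinearMap.one_apply]
    by_cases h : n = j
    · subst h
      rw [show ((ee n : ∀ _ : ℕ, ℂ) n) = (1:ℂ) from
        lp.single_apply_self (E := fun _ : ℕ => ℂ) 1 n (1:ℂ)]
      have : cc 0 n n = 1 := by simp [cc]
      rw [this]
      rw [div_self (ne_of_gt (hw n))]
      norm_num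
    · rw [show ((ee j : ∀ _ : ℕ, ℂ) n) = (0:ℂ) from
        lp.single_apply_ne (E := fun _ : ℕ => ℂ) 1 j (1:ℂ) h]
      have : cc 0 j n = 0 := by simp [cc, h]
      rw [this, mul_zero, Complex.ofReal_zero]
  | succ m ih =>
    intro j n
    rw [show T ^ (m+1) = T * T ^ m from by rw [pow_succ, pow_mul_comm']]
    rw [ContinuousLinearMap.mul_apply]
    rw [hT ((T ^ m) (ee j)) n]
    have hterm : ∀ k, ((T ^ m) (ee j) : ∀ _ : ℕ, ℂ) k / ((w k : ℝ) : ℂ)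
        = (((w j)⁻¹ * cc m j k : ℝ) : ℂ) := by
      intro k
      rw [ih j k, ← Complex.ofReal_div]
      congr 1
      have hk : w k ≠ 0 := ne_of_gt (hw k)
      have hj : w j ≠ 0 := ne_of_gt (hw j)
      field_simp
    rw [Finset.sum_congr rfl (fun k _ => hterm k), ← Complex.ofReal_sum, ← Complex.ofReal_mul]
    congr 1
    rw [← Finset.mul_sum]
    have : cc (m+1) j n = ((n:ℝ)+1)⁻¹ * ∑ k ∈ Finset.range (n+1), cc m j k := rfl
    rw [this]
    field_simp
section Analytic

variable (w : ℕ → ℝ) (T : ellOne →L[ℂ] ellOne)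

lemma hasSum_pow_norm (hw : ∀ n, 0 < w n) (hT : IsCesaroOp w w T) (m j : ℕ) :
    HasSum (fun n => (w n / w j) * cc m j n) ‖(T ^ m) (ee j)‖ := by
  have h := hasSum_norm1 ((T ^ m) (ee j))
  have heq : (fun n => ‖((T ^ m) (ee j) : ∀ _ : ℕ, ℂ) n‖)
      = fun n => (w n / w j) * cc m j n := by
    funext n
    rw [coord_pow w hw T hT m j n, Complex.norm_real, Real.norm_eq_abs, abs_of_nonneg]
    have h1 : 0 ≤ w n / w j := le_of_lt (div_pos (hw n) (hw j))
    exact mul_nonneg h1 (cc_nonneg m j n)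
  rwa [heq] at h

lemma norm_pow_eq (hw : ∀ n, 0 < w n) (hT : IsCesaroOp w w T) (m j : ℕ) :
    ‖(T ^ m) (ee j)‖ = ∑' n, (w n / w j) * cc m j n :=
  (hasSum_pow_norm w T hw hT m j).tsum_eq.symm

lemma tendsto_pow_ee_zero (hw : ∀ n, 0 < w n) (hT : IsCesaroOp w w T)
    (hsum : Summable w) (j : ℕ) (hj : 1 ≤ j) :
    Tendsto (fun m => (T ^ m) (ee j)) atTop (𝓝 0) := by
  have hj0 : (0:ℝ) < j := by exact_mod_cast hj
  -- the norms are summable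
  have hsummand : ∀ m, Summable (fun n => (w n / w j) * cc m j n) :=
    fun m => (hasSum_pow_norm w T hw hT m j).summable
  have hbdd : ∀ M, ∑ m ∈ Finset.range M, ‖(T ^ (m+1)) (ee j)‖
      ≤ ∑' n, w n * ((w j)⁻¹ * (j:ℝ)⁻¹) := by
    intro M
    have h1 : ∑ m ∈ Finset.range M, ‖(T ^ (m+1)) (ee j)‖
        = ∑' n, ∑ m ∈ Finset.range M, (w n / w j) * cc (m+1) j n := by
      rw [Summable.tsum_finsetSum (fun m _ => hsummand (m+1))]
      exact Finset.sum_congr rfl fun m _ => norm_pow_eq w T hw hT (m+1) j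
    rw [h1]
    refine Summable.tsum_le_tsum ?_ ?_ (hsum.mul_right _)
    · intro n
      rw [← Finset.mul_sum]
      have h2 := cc_sum_le j hj M n
      have h3 : (if j ≤ n then 1/(j:ℝ) else 0) ≤ (j:ℝ)⁻¹ := by
        split
        · rw [one_div]
        · positivity
      calc w n / w j * ∑ m ∈ Finset.range M, cc (m+1) j n
          ≤ w n / w j * (j:ℝ)⁻¹ := by
            refine mul_le_mul_of_nonneg_left (le_trans h2 h3) ?_
            exact le_of_lt (div_pos (hw n) (hw j))
        _ = w n * ((w j)⁻¹ * (j:ℝ)⁻¹) := by rw [div_eq_mul_inv]; ring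
    · exact summable_sum fun m _ => hsummand (m+1)
  have hsummnorm : Summable (fun m => ‖(T ^ (m+1)) (ee j)‖) :=
    summable_of_sum_range_le (fun m => norm_nonneg _) hbdd
  have h0 : Tendsto (fun m => ‖(T ^ (m+1)) (ee j)‖) atTop (𝓝 0) :=
    hsummnorm.tendsto_atTop_zero
  have h1 : Tendsto (fun m => ‖(T ^ m) (ee j)‖) atTop (𝓝 0) :=
    (tendsto_add_atTop_iff_nat 1).mp h0
  exact tendsto_zero_iff_norm_tendsto_zero.mpr h1

end Analytic
section LemB

variable (w : ℕ → ℝ) (T : ellOne →L[ℂ] ellOne)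

lemma memP (hw : ∀ n, 0 < w n) (hsum : Summable w) :
    Memℓp (fun n => ((w n / w 0 : ℝ) : ℂ)) 1 := by
  apply memℓp_gen
  have : (fun n => ‖((w n / w 0 : ℝ) : ℂ)‖ ^ (1:ℝ≥0∞).toReal) = fun n => w n * (w 0)⁻¹ := by
    funext n
    rw [ENNReal.toReal_one, Real.rpow_one, Complex.norm_real, Real.norm_eq_abs,
      abs_of_nonneg (le_of_lt (div_pos (hw n) (hw 0))), div_eq_mul_inv]
  rw [this]
  exact hsum.mul_right _

lemma tendsto_pow_ee0 (hw : ∀ n, 0 < w n) (hT : IsCesaroOp w w T) (hsum : Summable w) :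
    Tendsto (fun m => (T ^ m) (ee 0)) atTop
      (𝓝 (⟨fun n => ((w n / w 0 : ℝ) : ℂ), memP w hw hsum⟩ : ellOne)) := by
  set P : ellOne := (⟨fun n => ((w n / w 0 : ℝ) : ℂ), memP w hw hsum⟩ : ellOne) with hP
  have hPcoord : ∀ n, (P : ∀ _ : ℕ, ℂ) n = ((w n / w 0 : ℝ) : ℂ) := fun n => rfl
  rw [tendsto_iff_norm_sub_tendsto_zero]
  have hnorm : ∀ m, ‖(T ^ m) (ee 0) - P‖ = ∑' n, (w n / w 0) * (1 - cc m 0 n) := by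
    intro m
    have h := hasSum_norm1 ((T ^ m) (ee 0) - P)
    have heq : (fun n => ‖(((T ^ m) (ee 0) - P : ellOne) : ∀ _ : ℕ, ℂ) n‖)
        = fun n => (w n / w 0) * (1 - cc m 0 n) := by
      funext n
      have hc : (((T ^ m) (ee 0) - P : ellOne) : ∀ _ : ℕ, ℂ) n
          = ((T ^ m) (ee 0) : ∀ _ : ℕ, ℂ) n - (P : ∀ _ : ℕ, ℂ) n := rfl
      rw [hc, coord_pow w hw T hT m 0 n, hPcoord n, ← Complex.ofReal_sub, Complex.norm_real,
        Real.norm_eq_abs]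
      have : w n / w 0 * cc m 0 n - w n / w 0 = -((w n / w 0) * (1 - cc m 0 n)) := by ring
      rw [this, abs_neg, abs_of_nonneg]
      exact mul_nonneg (le_of_lt (div_pos (hw n) (hw 0)))
        (by linarith [cc_le_one m n])
    rw [← h.tsum_eq, heq]
  simp only [hnorm]
  have key : Tendsto (fun m => ∑' n, (w n / w 0) * (1 - cc m 0 n)) atTop (𝓝 (∑' _ : ℕ, (0:ℝ))) := by
    apply tendsto_tsum_of_dominated_convergence (bound := fun n => w n * (w 0)⁻¹)
      (hsum.mul_right _)
    · intro n
      apply squeeze_zero' (g := fun m => (w n / w 0) * ((n:ℝ)/((n:ℝ)+1))^m)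
      · filter_upwards with m
        exact mul_nonneg (le_of_lt (div_pos (hw n) (hw 0))) (by linarith [cc_le_one m n])
      · rw [eventually_atTop]
        refine ⟨1, fun m hm => ?_⟩
        obtain ⟨m', rfl⟩ : ∃ m', m = m' + 1 := ⟨m - 1, by omega⟩
        refine mul_le_mul_of_nonneg_left ?_ (le_of_lt (div_pos (hw n) (hw 0)))
        linarith [cc_ge m' n]
      · have hr : |(n:ℝ)/((n:ℝ)+1)| < 1 := by
          rw [abs_of_nonneg (by positivity)]
          rw [div_lt_one (by positivity)]
          linarith
        simpa using (tendsto_pow_atTop_nhds_zero_of_abs_lt_one hr).const_mul ((w n) / w 0)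
    · filter_upwards with m n
      rw [Real.norm_eq_abs, abs_of_nonneg (mul_nonneg (le_of_lt (div_pos (hw n) (hw 0)))
        (by linarith [cc_le_one m n]))]
      have h1 : 1 - cc m 0 n ≤ 1 := by linarith [cc_nonneg m 0 n]
      calc (w n / w 0) * (1 - cc m 0 n) ≤ (w n / w 0) * 1 :=
            mul_le_mul_of_nonneg_left h1 (le_of_lt (div_pos (hw n) (hw 0)))
        _ = w n * (w 0)⁻¹ := by rw [mul_one, div_eq_mul_inv]
  simpa using key

end LemB
section Fatou

variable (w : ℕ → ℝ) (T : ellOne →L[ℂ] ellOne)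

lemma norm_ee (j : ℕ) : ‖ee j‖ = 1 := by
  have := lp.norm_single (p := 1) (E := fun _ : ℕ => ℂ) (by norm_num) j (1:ℂ)
  rw [ee, this, norm_one]

lemma ratio_lt_one (k : ℕ) : |(k:ℝ)/((k:ℝ)+1)| < 1 := by
  rw [abs_of_nonneg (by positivity), div_lt_one (by positivity)]
  linarith

lemma summable_of_powerBounded (hw : ∀ n, 0 < w n) (hT : IsCesaroOp w w T)
    {C : ℝ} (hC : ∀ m : ℕ, 1 ≤ m → ‖T ^ m‖ ≤ C) : Summable w := by
  have hw0 : (0:ℝ) < w 0 := hw 0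
  apply summable_of_sum_range_le (c := C * w 0) (fun n => le_of_lt (hw n))
  intro N
  have key : ∀ m : ℕ, ∑ k ∈ Finset.range N, (w k / w 0) * (1 - ((k:ℝ)/((k:ℝ)+1))^(m+1)) ≤ C := by
    intro m
    have h1 : ∑ k ∈ Finset.range N, (w k / w 0) * cc (m+1) 0 k ≤ ‖(T ^ (m+1)) (ee 0)‖ :=
      sum_le_hasSum (Finset.range N)
        (fun k _ => mul_nonneg (le_of_lt (div_pos (hw k) hw0)) (cc_nonneg (m+1) 0 k))
        (hasSum_pow_norm w T hw hT (m+1) 0)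
    have h2 : ‖(T ^ (m+1)) (ee 0)‖ ≤ C := by
      calc ‖(T ^ (m+1)) (ee 0)‖ ≤ ‖T ^ (m+1)‖ * ‖ee 0‖ := ContinuousLinearMap.le_opNorm _ _
        _ = ‖T ^ (m+1)‖ := by rw [norm_ee, mul_one]
        _ ≤ C := hC (m+1) (Nat.le_add_left 1 m)
    refine le_trans (le_trans ?_ h1) h2
    apply Finset.sum_le_sum
    intro k _
    exact mul_le_mul_of_nonneg_left (cc_ge m k) (le_of_lt (div_pos (hw k) hw0))
  have hlim : Tendsto
      (fun m => ∑ k ∈ Finset.range N, (w k / w 0) * (1 - ((k:ℝ)/((k:ℝ)+1))^(m+1)))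
      atTop (𝓝 (∑ k ∈ Finset.range N, (w k / w 0) * 1)) := by
    apply tendsto_finset_sum
    intro k _
    apply Tendsto.const_mul
    have := tendsto_pow_atTop_nhds_zero_of_abs_lt_one (ratio_lt_one k)
    have h1 := ((tendsto_add_atTop_iff_nat 1).mpr this).const_sub 1
    simpa using h1
  have hle : ∑ k ∈ Finset.range N, (w k / w 0) * 1 ≤ C :=
    le_of_tendsto hlim (Eventually.of_forall key)
  have : ∑ k ∈ Finset.range N, w k = (∑ k ∈ Finset.range N, (w k / w 0) * 1) * w 0 := by
    rw [Finset.sum_mul]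
    apply Finset.sum_congr rfl
    intro k _
    field_simp
  rw [this]
  exact mul_le_mul_of_nonneg_right hle (le_of_lt hw0)

lemma geom_icc_le (k n : ℕ) :
    ∑ m ∈ Finset.Icc 1 n, ((k:ℝ)/((k:ℝ)+1))^m ≤ (k:ℝ) := by
  set r : ℝ := (k:ℝ)/((k:ℝ)+1) with hr
  have hr0 : 0 ≤ r := by positivity
  have hr1 : r < 1 := by
    rw [hr, div_lt_one (by positivity)]; linarith
  have h1 : ∑ m ∈ Finset.Icc 1 n, r ^ m = r * ∑ i ∈ Finset.range n, r ^ i := by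
    rw [Finset.mul_sum, ← Finset.Ico_add_one_right_eq_Icc, Finset.sum_Ico_eq_sum_range]
    norm_num
    apply Finset.sum_congr rfl
    intro i _
    rw [add_comm 1 i, pow_add, pow_one]
    ring
  rw [h1]
  have h2 : ∑ i ∈ Finset.range n, r ^ i ≤ (1 - r)⁻¹ := by
    rw [← tsum_geometric_of_lt_one hr0 hr1]
    exact Summable.sum_le_tsum _ (fun i _ => by positivity) (summable_geometric_of_lt_one hr0 hr1)
  have h3 : (1 - r)⁻¹ = (k:ℝ) + 1 := by
    rw [hr]
    have : 1 - (k:ℝ)/((k:ℝ)+1) = ((k:ℝ)+1)⁻¹ := by field_simp; ring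
    rw [this, inv_inv]
  calc r * ∑ i ∈ Finset.range n, r ^ i ≤ r * ((k:ℝ)+1) := by
        refine mul_le_mul_of_nonneg_left ?_ hr0
        rw [← h3]; exact h2
    _ = (k:ℝ) := by rw [hr]; field_simp

lemma summable_of_cesaroBounded (hw : ∀ n, 0 < w n) (hT : IsCesaroOp w w T)
    {C : ℝ} (hC : ∀ n : ℕ, 1 ≤ n → ‖((n : ℂ))⁻¹ • ∑ m ∈ Finset.Icc 1 n, T ^ m‖ ≤ C) :
    Summable w := by
  have hw0 : (0:ℝ) < w 0 := hw 0
  apply summable_of_sum_range_le (c := C * w 0) (fun n => le_of_lt (hw n))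
  intro N
  -- coordinates of the Cesàro average applied to `ee 0`
  have coordA : ∀ n k : ℕ,
      ((((n : ℂ))⁻¹ • ∑ m ∈ Finset.Icc 1 n, T ^ m) (ee 0) : ∀ _ : ℕ, ℂ) k
        = (((n:ℝ)⁻¹ * ∑ m ∈ Finset.Icc 1 n, (w k / w 0) * cc m 0 k : ℝ) : ℂ) := by
    intro n k
    rw [ContinuousLinearMap.smul_apply, ContinuousLinearMap.sum_apply]
    rw [lp.coeFn_smul, Pi.smul_apply, lp.coeFn_sum, Finset.sum_apply]
    have : ∀ m ∈ Finset.Icc 1 n, ((T ^ m) (ee 0) : ∀ _ : ℕ, ℂ) k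
        = (((w k / w 0) * cc m 0 k : ℝ) : ℂ) := fun m _ => coord_pow w hw T hT m 0 k
    rw [Finset.sum_congr rfl this]
    rw [← Complex.ofReal_sum]
    rw [smul_eq_mul]
    push_cast
    ring
  have key : ∀ n : ℕ, 1 ≤ n →
      ∑ k ∈ Finset.range N, (w k / w 0) * (1 - (k:ℝ)/(n:ℝ)) ≤ C := by
    intro n hn
    have hn0 : (0:ℝ) < (n:ℝ) := by exact_mod_cast hn
    set A := ((n : ℂ))⁻¹ • ∑ m ∈ Finset.Icc 1 n, T ^ m with hA
    have hnormA : ‖A (ee 0)‖ ≤ C := by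
      calc ‖A (ee 0)‖ ≤ ‖A‖ * ‖ee 0‖ := ContinuousLinearMap.le_opNorm _ _
        _ = ‖A‖ := by rw [norm_ee, mul_one]
        _ ≤ C := hC n hn
    have hlow : ∀ k, (w k / w 0) * (1 - (k:ℝ)/(n:ℝ)) ≤ ‖(A (ee 0) : ∀ _ : ℕ, ℂ) k‖ := by
      intro k
      rw [hA, coordA n k, Complex.norm_real, Real.norm_eq_abs]
      have hsumnn : 0 ≤ ∑ m ∈ Finset.Icc 1 n, (w k / w 0) * cc m 0 k :=
        Finset.sum_nonneg fun m _ =>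
          mul_nonneg (le_of_lt (div_pos (hw k) hw0)) (cc_nonneg m 0 k)
      rw [abs_of_nonneg (by positivity)]
      have hccge : ∀ m ∈ Finset.Icc 1 n, (w k / w 0) * (1 - ((k:ℝ)/((k:ℝ)+1))^m)
          ≤ (w k / w 0) * cc m 0 k := by
        intro m hm
        obtain ⟨hm1, hm2⟩ := Finset.mem_Icc.mp hm
        obtain ⟨m', rfl⟩ : ∃ m', m = m' + 1 := ⟨m - 1, by omega⟩
        exact mul_le_mul_of_nonneg_left (cc_ge m' k) (le_of_lt (div_pos (hw k) hw0))
      have h1 : ∑ m ∈ Finset.Icc 1 n, (w k / w 0) * (1 - ((k:ℝ)/((k:ℝ)+1))^m)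
          ≤ ∑ m ∈ Finset.Icc 1 n, (w k / w 0) * cc m 0 k := Finset.sum_le_sum hccge
      have h2 : ∑ m ∈ Finset.Icc 1 n, (w k / w 0) * (1 - ((k:ℝ)/((k:ℝ)+1))^m)
          = (w k / w 0) * ((n:ℝ) - ∑ m ∈ Finset.Icc 1 n, ((k:ℝ)/((k:ℝ)+1))^m) := by
        rw [← Finset.mul_sum, Finset.sum_sub_distrib, Finset.sum_const, Nat.card_Icc]
        simp
      have h3 : (w k / w 0) * ((n:ℝ) - (k:ℝ)) ≤ (w k / w 0) * ((n:ℝ) - ∑ m ∈ Finset.Icc 1 n, ((k:ℝ)/((k:ℝ)+1))^m) := by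
        refine mul_le_mul_of_nonneg_left ?_ (le_of_lt (div_pos (hw k) hw0))
        linarith [geom_icc_le k n]
      have h4 : (w k / w 0) * (1 - (k:ℝ)/(n:ℝ)) = (n:ℝ)⁻¹ * ((w k / w 0) * ((n:ℝ) - (k:ℝ))) := by
        have hd : (1 - (k:ℝ)/(n:ℝ)) = ((n:ℝ) - (k:ℝ)) * (n:ℝ)⁻¹ := by
          field_simp
        rw [hd]
        ring
      rw [h4]
      calc (n:ℝ)⁻¹ * ((w k / w 0) * ((n:ℝ) - (k:ℝ)))
          ≤ (n:ℝ)⁻¹ * ((w k / w 0) * ((n:ℝ) - ∑ m ∈ Finset.Icc 1 n, ((k:ℝ)/((k:ℝ)+1))^m)) :=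
            mul_le_mul_of_nonneg_left h3 (by positivity)
        _ ≤ (n:ℝ)⁻¹ * ∑ m ∈ Finset.Icc 1 n, (w k / w 0) * cc m 0 k := by
            refine mul_le_mul_of_nonneg_left (le_trans (le_of_eq h2.symm) h1) (by positivity)
    have hsum_le : ∑ k ∈ Finset.range N, (w k / w 0) * (1 - (k:ℝ)/(n:ℝ))
        ≤ ∑ k ∈ Finset.range N, ‖(A (ee 0) : ∀ _ : ℕ, ℂ) k‖ :=
      Finset.sum_le_sum fun k _ => hlow k
    refine le_trans hsum_le (le_trans ?_ hnormA)
    exact sum_le_hasSum (Finset.range N) (fun k _ => norm_nonneg _) (hasSum_norm1 (A (ee 0)))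
  have hlim : Tendsto
      (fun n : ℕ => ∑ k ∈ Finset.range N, (w k / w 0) * (1 - (k:ℝ)/(n:ℝ)))
      atTop (𝓝 (∑ k ∈ Finset.range N, (w k / w 0) * 1)) := by
    apply tendsto_finset_sum
    intro k _
    apply Tendsto.const_mul
    have := tendsto_const_div_atTop_nhds_zero_nat (k:ℝ)
    have h1 := this.const_sub 1
    simpa [div_eq_mul_inv] using h1
  have hle : ∑ k ∈ Finset.range N, (w k / w 0) * 1 ≤ C := by
    refine le_of_tendsto hlim ?_
    rw [eventually_atTop]
    exact ⟨1, fun n hn => key n hn⟩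
  have : ∑ k ∈ Finset.range N, w k = (∑ k ∈ Finset.range N, (w k / w 0) * 1) * w 0 := by
    rw [Finset.sum_mul]
    apply Finset.sum_congr rfl
    intro k _
    field_simp
  rw [this]
  exact mul_le_mul_of_nonneg_right hle (le_of_lt hw0)

end Fatou
section Abstract

lemma real_smul_eq (r : ℝ) (z : ellOne) : r • z = ((r:ℂ)) • z := by
  have h1 : r • z = r • ((1:ℂ) • z) := by rw [one_smul]
  rw [h1, ← smul_assoc]
  congr 1
  simp [Complex.real_smul]

lemma cesaro_of_tendsto {u : ℕ → ellOne} {y : ellOne} (h : Tendsto u atTop (𝓝 y)) :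
    Tendsto (fun n : ℕ => ((n:ℂ))⁻¹ • ∑ m ∈ Finset.Icc 1 n, u m) atTop (𝓝 y) := by
  have hshift : Tendsto (fun i : ℕ => u (1 + i)) atTop (𝓝 y) := by
    have h1 : Tendsto (fun i : ℕ => u (i + 1)) atTop (𝓝 y) :=
      (tendsto_add_atTop_iff_nat 1).mpr h
    simpa [add_comm] using h1
  have hc := hshift.cesaro_smul
  have heq : (fun n : ℕ => ((n:ℂ))⁻¹ • ∑ m ∈ Finset.Icc 1 n, u m)
      = fun n : ℕ => (n:ℝ)⁻¹ • ∑ i ∈ Finset.range n, u (1 + i) := by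
    funext n
    rw [← Finset.Ico_add_one_right_eq_Icc, Finset.sum_Ico_eq_sum_range]
    norm_num
    rw [real_smul_eq]
    norm_num
  rw [heq]
  exact hc

lemma bdd_of_tendsto {ι : Type*} (g : ι → ellOne →L[ℂ] ellOne)
    (h : ∀ x : ellOne, ∃ C : ℝ, ∀ i, ‖g i x‖ ≤ C) : ∃ C, ∀ i, ‖g i‖ ≤ C :=
  banach_steinhaus h

lemma bounded_orbit {u : ℕ → ellOne} {y : ellOne} (h : Tendsto u atTop (𝓝 y)) :
    ∃ C : ℝ, ∀ m, ‖u m‖ ≤ C := by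
  have hn : Tendsto (fun m => ‖u m‖) atTop (𝓝 ‖y‖) := h.norm
  have hb : BddAbove (Set.range fun m => ‖u m‖) := hn.bddAbove_range
  obtain ⟨C, hC⟩ := hb
  exact ⟨C, fun m => hC ⟨m, rfl⟩⟩

/-- Convergence on the singles plus a uniform bound gives convergence everywhere. -/
lemma conv_of_dense {S : ℕ → ellOne →L[ℂ] ellOne} {C : ℝ} (hC : ∀ m, ‖S m‖ ≤ C)
    (h : ∀ j : ℕ, ∃ y, Tendsto (fun m => S m (ee j)) atTop (𝓝 y)) (x : ellOne) :
    ∃ y, Tendsto (fun m => S m x) atTop (𝓝 y) := by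
  have hC0 : 0 ≤ C := le_trans (norm_nonneg _) (hC 0)
  -- finitely supported approximations
  set xN : ℕ → ellOne := fun N => ∑ i ∈ Finset.range N, lp.single 1 i ((x : ∀ _ : ℕ, ℂ) i)
    with hxN
  have happrox : Tendsto (fun N => xN N) atTop (𝓝 x) := by
    have := (lp.hasSum_single (p := 1) (by norm_num) x).tendsto_sum_nat
    exact this
  have hconvN : ∀ N, ∃ z, Tendsto (fun m => S m (xN N)) atTop (𝓝 z) := by
    intro N
    induction N with
    | zero =>
      refine ⟨0, ?_⟩
      simp [xN]
    | succ N ihN =>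
      obtain ⟨z, hz⟩ := ihN
      obtain ⟨yN, hyN⟩ := h N
      refine ⟨z + ((x : ∀ _ : ℕ, ℂ) N) • yN, ?_⟩
      have hsingle : lp.single (E := fun _ : ℕ => ℂ) 1 N ((x : ∀ _ : ℕ, ℂ) N)
          = ((x : ∀ _ : ℕ, ℂ) N) • ee N := by
        rw [ee, ← lp.single_smul]
        congr 1
        simp
      have hstep : ∀ m, S m (xN (N+1)) = S m (xN N) + ((x : ∀ _ : ℕ, ℂ) N) • S m (ee N) := by
        intro m
        rw [hxN]
        simp only [Finset.sum_range_succ, map_add, hsingle, map_smul]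
      simp only [hstep]
      exact hz.add (hyN.const_smul _)
  -- Cauchy argument
  have hcauchy : CauchySeq (fun m => S m x) := by
    rw [Metric.cauchySeq_iff]
    intro ε hε
    obtain ⟨N, hN⟩ := (Metric.tendsto_atTop.mp happrox) (ε / (3 * (C + 1))) (by positivity)
    have hxNclose : ‖x - xN N‖ < ε / (3 * (C + 1)) := by
      have := hN N le_rfl
      rwa [dist_comm, dist_eq_norm] at this
    obtain ⟨z, hz⟩ := hconvN N
    obtain ⟨M, hM⟩ := (Metric.cauchySeq_iff.mp hz.cauchySeq) (ε / 3) (by positivity)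
    refine ⟨M, fun m hm m' hm' => ?_⟩
    have hbound : ∀ k, ‖S k x - S k (xN N)‖ ≤ C * (ε / (3 * (C + 1))) := by
      intro k
      calc ‖S k x - S k (xN N)‖ = ‖S k (x - xN N)‖ := by rw [map_sub]
        _ ≤ ‖S k‖ * ‖x - xN N‖ := ContinuousLinearMap.le_opNorm _ _
        _ ≤ C * (ε / (3 * (C + 1))) :=
            mul_le_mul (hC k) (le_of_lt hxNclose) (norm_nonneg _) hC0
    have hCfrac : C * (ε / (3 * (C + 1))) ≤ ε / 3 := by
      have h1 : C * (ε / (3 * (C + 1))) = C * ε / (3 * (C + 1)) := by ring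
      rw [h1, div_le_div_iff₀ (by positivity : (0:ℝ) < 3 * (C + 1)) (by norm_num : (0:ℝ) < 3)]
      nlinarith [hε]
    have htri : dist (S m x) (S m' x)
        ≤ ‖S m x - S m (xN N)‖ + dist (S m (xN N)) (S m' (xN N)) + ‖S m' x - S m' (xN N)‖ := by
      rw [dist_eq_norm, dist_eq_norm]
      have : S m x - S m' x = (S m x - S m (xN N)) + (S m (xN N) - S m' (xN N))
          + -(S m' x - S m' (xN N)) := by abel
      rw [this]
      refine le_trans (norm_add_le _ _) ?_
      rw [norm_neg]
      exact add_le_add (norm_add_le _ _) le_rfl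
    have := hM m hm m' hm'
    -- dist < ε/3 each
    have h1 := hbound m
    have h2 := hbound m'
    calc dist (S m x) (S m' x)
        ≤ ‖S m x - S m (xN N)‖ + dist (S m (xN N)) (S m' (xN N)) + ‖S m' x - S m' (xN N)‖ := htri
      _ < ε / 3 + ε / 3 + ε / 3 := by
          have e1 : ‖S m x - S m (xN N)‖ ≤ ε / 3 := le_trans h1 hCfrac
          have e2 : ‖S m' x - S m' (xN N)‖ ≤ ε / 3 := le_trans h2 hCfrac
          have e3 : dist (S m (xN N)) (S m' (xN N)) < ε / 3 := this
          linarith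
      _ = ε := by ring
  exact cauchySeq_tendsto_of_complete hcauchy

end Abstract

theorem power_bounded_and_mean_ergodic_characterizations (w : ℕ → ℝ)
    (hw : ∀ n, 0 < w n) (hwb : ∃ C, ∀ n, w n ≤ C)
    (hM : Mvw w w ≠ ⊤)
    (T : ellOne →L[ℂ] ellOne) (hT : IsCesaroOp w w T) :
    (PowerBounded T ↔
        ∀ x : ellOne, ∃ y : ellOne, Tendsto (fun m : ℕ => (T ^ m) x) atTop (nhds y)) ∧
      (PowerBounded T → ∀ x : ellOne, ∃ y : ellOne,
        Tendsto (fun m : ℕ => (T ^ m) x) atTop (nhds y) ∧ T y = y ∧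
          x - y ∈ closure (Set.range fun z : ellOne => z - T z)) ∧
      (PowerBounded T → MeanErgodic T) ∧
      (MeanErgodic T ↔ CesaroBounded T) := by
  -- convergence of iterates on singles, given summability of the weight
  have hsingles : Summable w → ∀ j : ℕ,
      ∃ y, Tendsto (fun m => (T ^ m) (ee j)) atTop (𝓝 y) := by
    intro hsum j
    rcases Nat.eq_zero_or_pos j with hj | hj
    · subst hj
      exact ⟨_, tendsto_pow_ee0 w T hw hT hsum⟩
    · exact ⟨0, tendsto_pow_ee_zero w T hw hT hsum j hj⟩
  -- main implication: power bounded → strong convergence of iterates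
  have main_conv : PowerBounded T →
      ∀ x : ellOne, ∃ y, Tendsto (fun m : ℕ => (T ^ m) x) atTop (𝓝 y) := by
    rintro ⟨C, hC⟩ x
    have hsum : Summable w := summable_of_powerBounded w T hw hT hC
    have hC' : ∀ m : ℕ, ‖T ^ m‖ ≤ max C 1 := by
      intro m
      cases m with
      | zero =>
        rw [pow_zero]
        refine le_trans ?_ (le_max_right C 1)
        exact ContinuousLinearMap.norm_id_le
      | succ m => exact le_trans (hC (m+1) (Nat.le_add_left 1 m)) (le_max_left C 1)
    exact conv_of_dense hC' (hsingles hsum) x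
  refine ⟨⟨main_conv, ?_⟩, ?_, ?_, ?_, ?_⟩
  · -- strong convergence → power bounded
    intro h
    have hb : ∀ x : ellOne, ∃ C : ℝ, ∀ m : ℕ, ‖(T ^ m) x‖ ≤ C := by
      intro x
      obtain ⟨y, hy⟩ := h x
      exact bounded_orbit hy
    obtain ⟨C, hC⟩ := banach_steinhaus hb
    exact ⟨C, fun m _ => hC m⟩
  · -- properties of the limit
    intro hPB x
    obtain ⟨y, hy⟩ := main_conv hPB x
    have hpowsucc : ∀ m : ℕ, T ^ (m+1) = T * T ^ m := by
      intro m
      rw [pow_succ, pow_mul_comm']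
    have hTy : T y = y := by
      have h1 : Tendsto (fun m => T ((T ^ m) x)) atTop (𝓝 (T y)) :=
        (T.continuous.tendsto y).comp hy
      have h2 : Tendsto (fun m => (T ^ (m+1)) x) atTop (𝓝 y) :=
        (tendsto_add_atTop_iff_nat 1).mpr hy
      have h3 : (fun m => T ((T ^ m) x)) = fun m => (T ^ (m+1)) x := by
        funext m
        rw [hpowsucc m, ContinuousLinearMap.mul_apply]
      rw [h3] at h1
      exact tendsto_nhds_unique h1 h2
    refine ⟨y, hy, hTy, ?_⟩
    have hmem : ∀ m : ℕ, x - (T ^ m) x ∈ Set.range (fun z : ellOne => z - T z) := by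
      intro m
      refine ⟨∑ k ∈ Finset.range m, (T ^ k) x, ?_⟩
      show (∑ k ∈ Finset.range m, (T ^ k) x) - T (∑ k ∈ Finset.range m, (T ^ k) x)
          = x - (T ^ m) x
      rw [map_sum]
      have h4 : ∀ k, T ((T ^ k) x) = (T ^ (k+1)) x := by
        intro k
        rw [hpowsucc k, ContinuousLinearMap.mul_apply]
      simp only [h4]
      rw [← Finset.sum_sub_distrib]
      rw [Finset.sum_range_sub' (fun k => (T ^ k) x) m]
      rw [pow_zero, ContinuousLinearMap.one_apply]
    have htend : Tendsto (fun m => x - (T ^ m) x) atTop (𝓝 (x - y)) :=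
      tendsto_const_nhds.sub hy
    exact mem_closure_of_tendsto htend (Eventually.of_forall hmem)
  · -- power bounded → mean ergodic
    intro hPB x
    obtain ⟨y, hy⟩ := main_conv hPB x
    exact ⟨y, cesaro_of_tendsto hy⟩
  · -- mean ergodic → Cesàro bounded
    intro hME
    have happ : ∀ (n : ℕ) (x : ellOne),
        (((n : ℂ))⁻¹ • ∑ m ∈ Finset.Icc 1 n, T ^ m) x
          = ((n : ℂ))⁻¹ • ∑ m ∈ Finset.Icc 1 n, (T ^ m) x := by
      intro n x
      rw [ContinuousLinearMap.smul_apply, ContinuousLinearMap.sum_apply]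
    have hb : ∀ x : ellOne, ∃ C : ℝ, ∀ n : ℕ,
        ‖(((n : ℂ))⁻¹ • ∑ m ∈ Finset.Icc 1 n, T ^ m) x‖ ≤ C := by
      intro x
      obtain ⟨y, hy⟩ := hME x
      obtain ⟨C, hC⟩ := bounded_orbit hy
      refine ⟨C, fun n => ?_⟩
      rw [happ n x]
      exact hC n
    obtain ⟨C, hC⟩ := banach_steinhaus hb
    exact ⟨C, fun n _ => hC n⟩
  · -- Cesàro bounded → mean ergodic
    rintro ⟨C, hC⟩
    have hsum : Summable w := summable_of_cesaroBounded w T hw hT hC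
    set S : ℕ → ellOne →L[ℂ] ellOne :=
      fun n => ((n : ℂ))⁻¹ • ∑ m ∈ Finset.Icc 1 n, T ^ m with hS
    have happ : ∀ (n : ℕ) (x : ellOne),
        S n x = ((n : ℂ))⁻¹ • ∑ m ∈ Finset.Icc 1 n, (T ^ m) x := by
      intro n x
      rw [hS, ContinuousLinearMap.smul_apply, ContinuousLinearMap.sum_apply]
    have hC' : ∀ n : ℕ, ‖S n‖ ≤ max C 0 := by
      intro n
      cases n with
      | zero =>
        have : S 0 = 0 := by
          rw [hS]
          simp
        rw [this, norm_zero]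
        exact le_max_right C 0
      | succ n => exact le_trans (hC (n+1) (Nat.le_add_left 1 n)) (le_max_left C 0)
    have hsing : ∀ j : ℕ, ∃ y, Tendsto (fun n => S n (ee j)) atTop (𝓝 y) := by
      intro j
      obtain ⟨y, hy⟩ := hsingles hsum j
      refine ⟨y, ?_⟩
      have := cesaro_of_tendsto hy
      have heq : (fun n : ℕ => ((n:ℂ))⁻¹ • ∑ m ∈ Finset.Icc 1 n, (T ^ m) (ee j))
          = fun n => S n (ee j) := by
        funext n
        rw [happ n (ee j)]
      rwa [heq] at this
    intro x
    obtain ⟨y, hy⟩ := conv_of_dense hC' hsing x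
    refine ⟨y, ?_⟩
    have heq : (fun n : ℕ => ((n:ℂ))⁻¹ • ∑ m ∈ Finset.Icc 1 n, (T ^ m) x)
        = fun n => S n x := by
      funext n
      rw [happ n x]
    rwa [heq]
end
end

section
/- Let w be a weight with 𝒰_w := sup_{m≥1} (1/(m·w(m+1))) ∑_{n=m+1}^∞ w(n) < ∞ (this implies ∑_{n≥1} w(n) < ∞ and M_w < ∞, so the operator T below exists), and let T : ℓ¹ → ℓ¹ be the continuous linear operator satisfying (T x)(n) = (w(n)/n) ∑_{k=1}^n x(k)/w(k) for all x ∈ ℓ¹ and n ≥ 1. Then T is power bounded (sup_{m≥1} ‖T^m‖ < ∞) and uniformly mean ergodic: the Cesàro averages (1/n) ∑_{m=1}^n T^m converge in the operator norm of L(ℓ¹) as n → ∞. -/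
/- STATEMENT 18: If 𝒰_w < ∞ then the transferred Cesàro operator T on ℓ¹ is power bounded
and uniformly mean ergodic (the Cesàro averages converge in operator norm).
Index `n : ℕ` corresponds to the paper's `n+1`. -/

open Filter Topology

noncomputable section

def Uw (w : ℕ → ℝ) : ENNReal :=
  ⨆ i : ℕ, ENNReal.ofReal (1 / (((i : ℝ) + 1) * w (i + 1))) *
    ∑' k : ℕ, ENNReal.ofReal (w (i + 1 + k))

namespace Cesaro18

variable {w : ℕ → ℝ} {U : ℝ}

/-! ### Tail sums and weights -/

def Sw (w : ℕ → ℝ) (j : ℕ) : ℝ := ∑' k, w (j + k)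

def bw (w : ℕ → ℝ) (n : ℕ) : ℝ := (w n + Sw w n / n) / (n + 1)

def dw (w : ℕ → ℝ) (n : ℕ) : ℝ := if n = 0 then 1 else 1 + Sw w n / (n * w n)

def gw (w : ℕ → ℝ) (n : ℕ) : ℝ := Sw w n / n

def Nw (w : ℕ → ℝ) (y : ℕ → ℂ) : ENNReal := ∑' n, ENNReal.ofReal (dw w n * ‖y n‖)

lemma summable_shift (hsum : Summable w) (j : ℕ) : Summable (fun k => w (j + k)) := by
  have := (summable_nat_add_iff j).2 hsum
  simpa [add_comm] using this

lemma Sw_nonneg (hw : ∀ n, 0 < w n) (j : ℕ) : 0 ≤ Sw w j :=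
  tsum_nonneg (fun _ => (hw _).le)

lemma Sw_rec (hsum : Summable w) (n : ℕ) : Sw w n = w n + Sw w (n + 1) := by
  have h := Summable.tsum_eq_zero_add (summable_shift hsum n)
  simp only [add_zero] at h
  rw [Sw, h, Sw]
  congr 1
  exact tsum_congr fun k => by rw [show n + (k + 1) = n + 1 + k by omega]

lemma bw_nonneg (hw : ∀ n, 0 < w n) (hsum : Summable w) (n : ℕ) : 0 ≤ bw w n := by
  have h1 := (hw n).le
  have h2 := Sw_nonneg hw n
  have : (0:ℝ) ≤ (n:ℝ) := n.cast_nonneg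
  apply div_nonneg _ (by linarith)
  positivity

lemma gw_nonneg (hw : ∀ n, 0 < w n) (n : ℕ) : 0 ≤ gw w n := by
  have := Sw_nonneg hw n
  have : (0:ℝ) ≤ (n:ℝ) := n.cast_nonneg
  unfold gw
  positivity

lemma bw_telescope (hw : ∀ n, 0 < w n) (hsum : Summable w) {n : ℕ} (hn : 1 ≤ n) :
    bw w n = gw w n - gw w (n + 1) := by
  have hS : Sw w (n+1) = Sw w n - w n := by have := Sw_rec hsum n; linarith
  have hn' : 0 < n := hn
  have hn0 : (n:ℝ) ≠ 0 := by positivity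
  have hn1 : (n:ℝ) + 1 ≠ 0 := by positivity
  rw [bw, gw, gw, hS]
  push_cast
  field_simp
  ring

lemma sum_bw_range (hw : ∀ n, 0 < w n) (hsum : Summable w) {k : ℕ} (hk : 1 ≤ k) (N : ℕ) :
    ∑ j ∈ Finset.range N, bw w (k + j) ≤ gw w k := by
  have h : ∑ j ∈ Finset.range N, bw w (k + j)
      = ∑ j ∈ Finset.range N, (gw w (k + j) - gw w (k + j + 1)) := by
    refine Finset.sum_congr rfl fun j _ => ?_
    exact bw_telescope hw hsum (by omega)
  have h2 : ∑ j ∈ Finset.range N, (gw w (k + j) - gw w (k + j + 1))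
      = gw w (k + 0) - gw w (k + N) := by
    rw [← Finset.sum_range_sub' (fun j => gw w (k + j)) N]
    exact Finset.sum_congr rfl fun j _ => by rw [show k + j + 1 = k + (j+1) by omega]
  rw [h, h2]
  have := gw_nonneg hw (k + N)
  simp only [add_zero]
  linarith

lemma summable_bw_shift (hw : ∀ n, 0 < w n) (hsum : Summable w) {k : ℕ} (hk : 1 ≤ k) :
    Summable (fun j => bw w (k + j)) :=
  summable_of_sum_range_le (fun _ => bw_nonneg hw hsum _) (sum_bw_range hw hsum hk)

lemma tsum_bw_le (hw : ∀ n, 0 < w n) (hsum : Summable w) {k : ℕ} (hk : 1 ≤ k) :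
    ∑' j, bw w (k + j) ≤ gw w k :=
  Summable.tsum_le_of_sum_range_le (summable_bw_shift hw hsum hk) (sum_bw_range hw hsum hk)

lemma tsum_bw_ennreal_le (hw : ∀ n, 0 < w n) (hsum : Summable w) {k : ℕ} (hk : 1 ≤ k) :
    ∑' j, ENNReal.ofReal (bw w (k + j)) ≤ ENNReal.ofReal (gw w k) := by
  rw [← ENNReal.ofReal_tsum_of_nonneg (fun j => bw_nonneg hw hsum _)
      (summable_bw_shift hw hsum hk)]
  exact ENNReal.ofReal_le_ofReal (tsum_bw_le hw hsum hk)

lemma one_le_dw (hw : ∀ n, 0 < w n) (n : ℕ) : 1 ≤ dw w n := by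
  unfold dw
  split
  · exact le_refl 1
  · have h1 := Sw_nonneg hw n
    have h2 : (0:ℝ) < (n:ℝ) * w n := by
      have : 0 < n := by omega
      have := hw n
      positivity
    nlinarith [div_nonneg h1 h2.le]

lemma dw_nonneg (hw : ∀ n, 0 < w n) (n : ℕ) : 0 ≤ dw w n :=
  le_trans zero_le_one (one_le_dw hw n)

lemma dw_le (hw : ∀ n, 0 < w n) (hU1 : 1 ≤ U)
    (hS : ∀ j, 1 ≤ j → Sw w j ≤ U * (j * w j)) (n : ℕ) : dw w n ≤ 1 + U := by
  unfold dw
  split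
  case isTrue => linarith
  case isFalse h =>
    have hn : 1 ≤ n := by omega
    have h2 : (0:ℝ) < (n:ℝ) * w n := by
      have : 0 < n := by omega
      have := hw n
      positivity
    have := hS n hn
    have h3 : Sw w n / ((n:ℝ) * w n) ≤ U := by
      rw [div_le_iff₀ h2]
      linarith [hS n hn]
    linarith

lemma dw_mul_w (hw : ∀ n, 0 < w n) {n : ℕ} (hn : 1 ≤ n) :
    dw w n * (w n / (n + 1)) = bw w n := by
  have hn0 : n ≠ 0 := by omega
  have hwn : w n ≠ 0 := (hw n).ne'
  have hnr : (n:ℝ) ≠ 0 := Nat.cast_ne_zero.2 hn0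
  rw [dw, if_neg hn0, bw]
  field_simp

lemma gw_le_q (hw : ∀ n, 0 < w n) (hU1 : 1 ≤ U)
    (hS : ∀ j, 1 ≤ j → Sw w j ≤ U * (j * w j)) {k : ℕ} (hk : 1 ≤ k) :
    gw w k ≤ U / (U + 1) * (dw w k * w k) := by
  have hk0 : k ≠ 0 := by omega
  have hwk := hw k
  have hkr : (0:ℝ) < (k:ℝ) := by exact_mod_cast Nat.pos_of_ne_zero hk0
  have hdw : dw w k * w k = w k + Sw w k / k := by
    rw [dw, if_neg hk0]; field_simp
  rw [gw, hdw]
  have hU0 : (0:ℝ) < U + 1 := by linarith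
  rw [div_mul_eq_mul_div, le_div_iff₀ hU0]
  have hSk : Sw w k / k ≤ U * w k := by
    rw [div_le_iff₀ hkr]
    calc Sw w k ≤ U * (k * w k) := hS k hk
    _ = U * w k * k := by ring
  nlinarith

/-! ### The key contraction estimate -/

lemma contraction (hw : ∀ n, 0 < w n) (hsum : Summable w) (hU1 : 1 ≤ U)
    (hS : ∀ j, 1 ≤ j → Sw w j ≤ U * (j * w j))
    (T : ellOne →L[ℂ] ellOne) (hT : IsCesaroOp w w T)
    (x : ellOne) (hx0 : (x : ∀ _ : ℕ, ℂ) 0 = 0) :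
    Nw w (T x) ≤ ENNReal.ofReal (U / (U + 1)) * Nw w x := by
  set q : ℝ := U / (U + 1) with hq
  set X : ℕ → ℂ := (x : ∀ _ : ℕ, ℂ) with hX
  set F : ℕ → ℕ → ENNReal := fun n k =>
    if k ≤ n then ENNReal.ofReal (bw w n) * ENNReal.ofReal (‖X k‖ / w k) else 0 with hF
  have hx0n : ‖X 0‖ / w 0 = 0 := by rw [hx0]; simp
  -- Step A
  have stepA : ∀ n, ENNReal.ofReal (dw w n * ‖(T x : ∀ _ : ℕ, ℂ) n‖) ≤ ∑' k, F n k := by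
    intro n
    have htsum : ∑' k, F n k = ∑ k ∈ Finset.range (n + 1), F n k := by
      refine tsum_eq_sum ?_
      intro k hk
      have : ¬ k ≤ n := by
        simp only [Finset.mem_range] at hk; omega
      simp [hF, this]
    match n with
    | 0 =>
      have h0 : (T x : ∀ _ : ℕ, ℂ) 0 = 0 := by
        rw [hT x 0]
        simp [← hX, hx0]
      rw [h0]
      simp
    | Nat.succ m =>
      set n := m + 1
      have hn : 1 ≤ n := by omega
      have hnorm : ‖(T x : ∀ _ : ℕ, ℂ) n‖ ≤ (w n / (n + 1)) * ∑ k ∈ Finset.range (n + 1), ‖X k‖ / w k := by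
        rw [hT x n]
        rw [norm_mul]
        have h1 : ‖((w n / (↑n + 1) : ℝ) : ℂ)‖ = w n / (n + 1) := by
          rw [Complex.norm_real, Real.norm_eq_abs,
            abs_of_nonneg (div_nonneg (hw n).le (by positivity))]
        rw [h1]
        refine mul_le_mul_of_nonneg_left ?_ (div_nonneg (hw n).le (by positivity))
        calc ‖∑ k ∈ Finset.range (n + 1), X k / ((w k : ℝ) : ℂ)‖
            ≤ ∑ k ∈ Finset.range (n + 1), ‖X k / ((w k : ℝ) : ℂ)‖ := norm_sum_le _ _
          _ = ∑ k ∈ Finset.range (n + 1), ‖X k‖ / w k := by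
              refine Finset.sum_congr rfl fun k _ => ?_
              rw [norm_div, Complex.norm_real, Real.norm_eq_abs, abs_of_nonneg (hw k).le]
      have hmul : dw w n * ‖(T x : ∀ _ : ℕ, ℂ) n‖
          ≤ bw w n * ∑ k ∈ Finset.range (n + 1), ‖X k‖ / w k := by
        calc dw w n * ‖(T x : ∀ _ : ℕ, ℂ) n‖
            ≤ dw w n * ((w n / (n + 1)) * ∑ k ∈ Finset.range (n + 1), ‖X k‖ / w k) := by
              apply mul_le_mul_of_nonneg_left hnorm (dw_nonneg hw n)
          _ = (dw w n * (w n / (n + 1))) * ∑ k ∈ Finset.range (n + 1), ‖X k‖ / w k := by ring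
          _ = bw w n * ∑ k ∈ Finset.range (n + 1), ‖X k‖ / w k := by rw [dw_mul_w hw hn]
      calc ENNReal.ofReal (dw w n * ‖(T x : ∀ _ : ℕ, ℂ) n‖)
          ≤ ENNReal.ofReal (bw w n * ∑ k ∈ Finset.range (n + 1), ‖X k‖ / w k) :=
            ENNReal.ofReal_le_ofReal hmul
        _ = ∑ k ∈ Finset.range (n + 1), ENNReal.ofReal (bw w n * (‖X k‖ / w k)) := by
            rw [Finset.mul_sum]
            rw [ENNReal.ofReal_sum_of_nonneg]
            intro k _
            have := bw_nonneg hw hsum n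
            have := (hw k).le
            positivity
        _ = ∑ k ∈ Finset.range (n + 1), F n k := by
            refine Finset.sum_congr rfl fun k hk => ?_
            have hkn : k ≤ n := by simp only [Finset.mem_range] at hk; omega
            rw [hF]
            simp only [if_pos hkn]
            rw [ENNReal.ofReal_mul (bw_nonneg hw hsum n)]
        _ = ∑' k, F n k := htsum.symm
  -- Step C
  have stepC : ∀ k, ∑' n, F n k ≤ ENNReal.ofReal q * ENNReal.ofReal (dw w k * ‖X k‖) := by
    intro k
    match k with
    | 0 =>
      have : ∀ n, F n 0 = 0 := by
        intro n
        simp only [hF]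
        rw [hx0n]
        simp
      simp [this]
    | Nat.succ j =>
      set k := j + 1
      have hk : 1 ≤ k := by omega
      have hsplit : ∀ n, F n k = (if k ≤ n then ENNReal.ofReal (bw w n) else 0)
          * ENNReal.ofReal (‖X k‖ / w k) := by
        intro n
        simp only [hF]
        by_cases h : k ≤ n
        · rw [if_pos h, if_pos h]
        · rw [if_neg h, if_neg h, zero_mul]
      have h1 : ∑' n, F n k = (∑' n, if k ≤ n then ENNReal.ofReal (bw w n) else 0)
          * ENNReal.ofReal (‖X k‖ / w k) := by
        rw [← ENNReal.tsum_mul_right]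
        exact tsum_congr hsplit
      have h2 : (∑' n, if k ≤ n then ENNReal.ofReal (bw w n) else 0)
          = ∑' i, ENNReal.ofReal (bw w (k + i)) := by
        symm
        have hinj : Function.Injective (fun i : ℕ => k + i) := add_right_injective k
        have hsupp : Function.support (fun n => if k ≤ n then ENNReal.ofReal (bw w n) else 0)
            ⊆ Set.range (fun i : ℕ => k + i) := by
          intro n hn
          have hkn : k ≤ n := by
            by_contra h
            simp only [Function.mem_support, if_neg h] at hn
            exact hn rfl
          exact ⟨n - k, show k + (n - k) = n by omega⟩
        rw [← hinj.tsum_eq hsupp]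
        exact tsum_congr fun i => by simp [Nat.le_add_right]
      have h3 : (∑' n, if k ≤ n then ENNReal.ofReal (bw w n) else 0)
          ≤ ENNReal.ofReal (q * (dw w k * w k)) := by
        rw [h2]
        calc ∑' i, ENNReal.ofReal (bw w (k + i)) ≤ ENNReal.ofReal (gw w k) :=
              tsum_bw_ennreal_le hw hsum hk
          _ ≤ ENNReal.ofReal (q * (dw w k * w k)) :=
              ENNReal.ofReal_le_ofReal (gw_le_q hw hU1 hS hk)
      calc ∑' n, F n k
          ≤ ENNReal.ofReal (q * (dw w k * w k)) * ENNReal.ofReal (‖X k‖ / w k) := by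
            rw [h1]; exact mul_le_mul_left h3 _
        _ = ENNReal.ofReal (q * (dw w k * w k) * (‖X k‖ / w k)) := by
            rw [← ENNReal.ofReal_mul]
            have := dw_nonneg hw k
            have := (hw k).le
            have hq0 : 0 ≤ q := by positivity
            positivity
        _ = ENNReal.ofReal (q * (dw w k * ‖X k‖)) := by
            congr 1
            have hwk : w k ≠ 0 := (hw k).ne'
            field_simp
        _ = ENNReal.ofReal q * ENNReal.ofReal (dw w k * ‖X k‖) := by
            rw [ENNReal.ofReal_mul]
            positivity
  -- assemble
  calc Nw w (T x : ∀ _ : ℕ, ℂ) ≤ ∑' n, ∑' k, F n k := ENNReal.tsum_le_tsum stepA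
    _ = ∑' k, ∑' n, F n k := ENNReal.tsum_comm
    _ ≤ ∑' k, ENNReal.ofReal q * ENNReal.ofReal (dw w k * ‖X k‖) := ENNReal.tsum_le_tsum stepC
    _ = ENNReal.ofReal q * Nw w X := by rw [ENNReal.tsum_mul_left]; rfl

/-! ### Norm comparison -/

lemma hasSum_norm_l1 (x : ellOne) : HasSum (fun n => ‖(x : ∀ _ : ℕ, ℂ) n‖) ‖x‖ := by
  have h := lp.hasSum_norm (p := 1) (by norm_num) x
  simpa using h

lemma norm_eq_tsum_l1 (x : ellOne) : ‖x‖ = ∑' n, ‖(x : ∀ _ : ℕ, ℂ) n‖ :=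
  (hasSum_norm_l1 x).tsum_eq.symm

lemma ofReal_norm_le_Nw (hw : ∀ n, 0 < w n) (x : ellOne) :
    ENNReal.ofReal ‖x‖ ≤ Nw w (x : ∀ _ : ℕ, ℂ) := by
  rw [norm_eq_tsum_l1, ENNReal.ofReal_tsum_of_nonneg (fun _ => norm_nonneg _)
    (hasSum_norm_l1 x).summable]
  exact ENNReal.tsum_le_tsum fun n => ENNReal.ofReal_le_ofReal
    (le_mul_of_one_le_left (norm_nonneg _) (one_le_dw hw n))

lemma Nw_le_ofReal (hw : ∀ n, 0 < w n) (hU1 : 1 ≤ U)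
    (hS : ∀ j, 1 ≤ j → Sw w j ≤ U * (j * w j)) (x : ellOne) :
    Nw w (x : ∀ _ : ℕ, ℂ) ≤ ENNReal.ofReal ((1 + U) * ‖x‖) := by
  have hsummable : Summable (fun n => (1 + U) * ‖(x : ∀ _ : ℕ, ℂ) n‖) :=
    (hasSum_norm_l1 x).summable.mul_left _
  rw [norm_eq_tsum_l1 x, ← tsum_mul_left,
      ENNReal.ofReal_tsum_of_nonneg (fun n => by have := norm_nonneg ((x : ∀ _ : ℕ, ℂ) n); nlinarith)
        hsummable]
  exact ENNReal.tsum_le_tsum fun n => ENNReal.ofReal_le_ofReal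
    (mul_le_mul_of_nonneg_right (dw_le hw hU1 hS n) (norm_nonneg _))

/-! ### The eigenvector and the projection -/

lemma Tx_zero (hw : ∀ n, 0 < w n) (T : ellOne →L[ℂ] ellOne) (hT : IsCesaroOp w w T)
    (y : ellOne) : (T y : ∀ _ : ℕ, ℂ) 0 = (y : ∀ _ : ℕ, ℂ) 0 := by
  rw [hT y 0]
  have h0 : ((w 0 : ℝ) : ℂ) ≠ 0 := by exact_mod_cast (hw 0).ne'
  simp only [Finset.range_one, Finset.sum_singleton, Nat.cast_zero, zero_add, div_one]
  field_simp

def uvec (hw : ∀ n, 0 < w n) (hsum : Summable w) : ellOne :=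
  ⟨fun n => ((w n : ℝ) : ℂ), memℓp_gen (by
    have h : (fun n => ‖((w n : ℝ) : ℂ)‖ ^ (1 : ENNReal).toReal) = w := by
      funext n
      simp [abs_of_pos (hw n)]
    rw [h]
    exact hsum)⟩

lemma uvec_apply (hw : ∀ n, 0 < w n) (hsum : Summable w) (n : ℕ) :
    (uvec hw hsum : ∀ _ : ℕ, ℂ) n = ((w n : ℝ) : ℂ) := rfl

lemma T_uvec (hw : ∀ n, 0 < w n) (hsum : Summable w)
    (T : ellOne →L[ℂ] ellOne) (hT : IsCesaroOp w w T) :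
    T (uvec hw hsum) = uvec hw hsum := by
  apply lp.ext
  funext n
  rw [hT (uvec hw hsum) n, uvec_apply]
  have h1 : ∀ k, (uvec hw hsum : ∀ _ : ℕ, ℂ) k / ((w k : ℝ) : ℂ) = 1 := by
    intro k
    rw [uvec_apply]
    have : ((w k : ℝ) : ℂ) ≠ 0 := by
      exact_mod_cast (hw k).ne'
    exact div_self this
  simp only [h1, Finset.sum_const, Finset.card_range, nsmul_eq_mul, mul_one]
  have hne : ((n : ℂ) + 1) ≠ 0 := Nat.cast_add_one_ne_zero n
  push_cast
  field_simp

def eval0 : ellOne →L[ℂ] ℂ :=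
  LinearMap.mkContinuous
    { toFun := fun x => (x : ∀ _ : ℕ, ℂ) 0
      map_add' := fun x y => by simp [lp.coeFn_add]
      map_smul' := fun c x => by simp [lp.coeFn_smul] }
    1 (fun x => by
      rw [one_mul]
      exact le_hasSum (hasSum_norm_l1 x) 0 (fun j _ => norm_nonneg _))

lemma eval0_apply (x : ellOne) : eval0 x = (x : ∀ _ : ℕ, ℂ) 0 := rfl

def Pop (hw : ∀ n, 0 < w n) (hsum : Summable w) : ellOne →L[ℂ] ellOne :=
  eval0.smulRight ((((w 0 : ℝ) : ℂ))⁻¹ • uvec hw hsum)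

lemma Pop_apply (hw : ∀ n, 0 < w n) (hsum : Summable w) (x : ellOne) :
    Pop hw hsum x = ((x : ∀ _ : ℕ, ℂ) 0 * (((w 0 : ℝ) : ℂ))⁻¹) • uvec hw hsum := by
  rw [Pop, ContinuousLinearMap.smulRight_apply, eval0_apply, smul_smul]

lemma Pop_zero_coord (hw : ∀ n, 0 < w n) (hsum : Summable w) (x : ellOne) :
    ((Pop hw hsum x : ellOne) : ∀ _ : ℕ, ℂ) 0 = (x : ∀ _ : ℕ, ℂ) 0 := by
  rw [Pop_apply, lp.coeFn_smul]
  simp only [Pi.smul_apply, uvec_apply, smul_eq_mul]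
  have : ((w 0 : ℝ) : ℂ) ≠ 0 := by exact_mod_cast (hw 0).ne'
  field_simp

lemma T_Pop (hw : ∀ n, 0 < w n) (hsum : Summable w)
    (T : ellOne →L[ℂ] ellOne) (hT : IsCesaroOp w w T) (x : ellOne) :
    T (Pop hw hsum x) = Pop hw hsum x := by
  rw [Pop_apply, map_smul, T_uvec hw hsum T hT]

/-! ### Decay of powers -/

lemma pow_decay (hw : ∀ n, 0 < w n) (hsum : Summable w) (hU1 : 1 ≤ U)
    (hS : ∀ j, 1 ≤ j → Sw w j ≤ U * (j * w j))
    (T : ellOne →L[ℂ] ellOne) (hT : IsCesaroOp w w T)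
    (x : ellOne) (hx0 : (x : ∀ _ : ℕ, ℂ) 0 = 0) (m : ℕ) :
    ‖(T ^ m) x‖ ≤ (1 + U) * (U / (U + 1)) ^ m * ‖x‖ := by
  set q : ℝ := U / (U + 1) with hqdef
  have hq0 : 0 ≤ q := by positivity
  have key : ∀ m, ((T ^ m) x : ∀ _ : ℕ, ℂ) 0 = 0 ∧
      Nw w ((T ^ m) x : ∀ _ : ℕ, ℂ) ≤ ENNReal.ofReal q ^ m * Nw w (x : ∀ _ : ℕ, ℂ) := by
    intro m
    induction m with
    | zero =>
      simp only [pow_zero, ContinuousLinearMap.one_apply, one_mul]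
      exact ⟨hx0, le_refl _⟩
    | succ m ih =>
      have happ : (T ^ (m + 1)) x = T ((T ^ m) x) := by
        rw [pow_succ', ContinuousLinearMap.mul_apply]
      constructor
      · rw [happ, Tx_zero hw T hT]
        exact ih.1
      · rw [happ]
        calc Nw w ((T ((T ^ m) x)) : ∀ _ : ℕ, ℂ)
            ≤ ENNReal.ofReal q * Nw w ((T ^ m) x : ∀ _ : ℕ, ℂ) :=
              contraction hw hsum hU1 hS T hT _ ih.1
          _ ≤ ENNReal.ofReal q * (ENNReal.ofReal q ^ m * Nw w (x : ∀ _ : ℕ, ℂ)) :=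
              mul_le_mul_right ih.2 _
          _ = ENNReal.ofReal q ^ (m + 1) * Nw w (x : ∀ _ : ℕ, ℂ) := by ring
  have h1 : ENNReal.ofReal ‖(T ^ m) x‖ ≤ ENNReal.ofReal (q ^ m * ((1 + U) * ‖x‖)) := by
    calc ENNReal.ofReal ‖(T ^ m) x‖ ≤ Nw w ((T ^ m) x : ∀ _ : ℕ, ℂ) := ofReal_norm_le_Nw hw _
      _ ≤ ENNReal.ofReal q ^ m * Nw w (x : ∀ _ : ℕ, ℂ) := (key m).2
      _ ≤ ENNReal.ofReal q ^ m * ENNReal.ofReal ((1 + U) * ‖x‖) :=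
          mul_le_mul_right (Nw_le_ofReal hw hU1 hS x) _
      _ = ENNReal.ofReal (q ^ m * ((1 + U) * ‖x‖)) := by
          rw [← ENNReal.ofReal_pow hq0, ← ENNReal.ofReal_mul (pow_nonneg hq0 m)]
  have h2 : ‖(T ^ m) x‖ ≤ q ^ m * ((1 + U) * ‖x‖) := by
    have hnn : 0 ≤ q ^ m * ((1 + U) * ‖x‖) := by
      have := norm_nonneg x
      have h1U : (0:ℝ) ≤ 1 + U := by linarith
      positivity
    exact (ENNReal.ofReal_le_ofReal_iff hnn).1 h1
  calc ‖(T ^ m) x‖ ≤ q ^ m * ((1 + U) * ‖x‖) := h2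
    _ = (1 + U) * q ^ m * ‖x‖ := by ring

lemma pow_sub_Pop_norm (hw : ∀ n, 0 < w n) (hsum : Summable w) (hU1 : 1 ≤ U)
    (hS : ∀ j, 1 ≤ j → Sw w j ≤ U * (j * w j))
    (T : ellOne →L[ℂ] ellOne) (hT : IsCesaroOp w w T) (m : ℕ) :
    ‖T ^ m - Pop hw hsum‖ ≤
      ((1 + U) * (1 + ‖Pop hw hsum‖)) * (U / (U + 1)) ^ m := by
  set P := Pop hw hsum with hP
  set q : ℝ := U / (U + 1) with hqdef
  have hq0 : 0 ≤ q := by positivity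
  have h1U : (0:ℝ) ≤ 1 + U := by linarith
  have hPn : (0:ℝ) ≤ 1 + ‖P‖ := by have := norm_nonneg P; linarith
  apply ContinuousLinearMap.opNorm_le_bound _ (by positivity)
  intro x
  have hx0 : ((x - P x : ellOne) : ∀ _ : ℕ, ℂ) 0 = 0 := by
    rw [lp.coeFn_sub, Pi.sub_apply, hP, Pop_zero_coord, sub_self]
  have hTmP : ∀ m : ℕ, (T ^ m) (P x) = P x := by
    intro m
    induction m with
    | zero => simp
    | succ m ih =>
      rw [pow_succ', ContinuousLinearMap.mul_apply, ih]
      exact T_Pop hw hsum T hT x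
  have heq : (T ^ m - P) x = (T ^ m) (x - P x) := by
    rw [ContinuousLinearMap.sub_apply, map_sub, hTmP m]
  rw [heq]
  calc ‖(T ^ m) (x - P x)‖ ≤ (1 + U) * q ^ m * ‖x - P x‖ :=
        pow_decay hw hsum hU1 hS T hT _ hx0 m
    _ ≤ (1 + U) * q ^ m * ((1 + ‖P‖) * ‖x‖) := by
        have hb : ‖x - P x‖ ≤ (1 + ‖P‖) * ‖x‖ := by
          calc ‖x - P x‖ ≤ ‖x‖ + ‖P x‖ := norm_sub_le _ _
            _ ≤ ‖x‖ + ‖P‖ * ‖x‖ := by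
                have := P.le_opNorm x
                linarith
            _ = (1 + ‖P‖) * ‖x‖ := by ring
        have : (0:ℝ) ≤ (1 + U) * q ^ m := by positivity
        nlinarith [norm_nonneg (x - P x)]
    _ = ((1 + U) * (1 + ‖P‖)) * q ^ m * ‖x‖ := by ring

end Cesaro18

set_option maxHeartbeats 1000000 in
open Cesaro18 in
theorem power_bounded_and_uniformly_mean_ergodic_of_Uw (w : ℕ → ℝ)
    (hw : ∀ n, 0 < w n) (hwb : ∃ C, ∀ n, w n ≤ C)
    (hU : Uw w ≠ ⊤)
    (T : ellOne →L[ℂ] ellOne) (hT : IsCesaroOp w w T) :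
    (∃ C : ℝ, ∀ m : ℕ, 1 ≤ m → ‖T ^ m‖ ≤ C) ∧
      ∃ P : ellOne →L[ℂ] ellOne,
        Tendsto (fun n : ℕ => ((n : ℂ))⁻¹ • ∑ m ∈ Finset.Icc 1 n, T ^ m) atTop (nhds P) := by
  -- Extract summability and tail bounds from hU
  have hterm : ∀ i : ℕ, ENNReal.ofReal (1 / (((i : ℝ) + 1) * w (i + 1))) *
      ∑' k : ℕ, ENNReal.ofReal (w (i + 1 + k)) ≤ Uw w := by
    intro i
    exact le_iSup (fun i : ℕ => ENNReal.ofReal (1 / (((i : ℝ) + 1) * w (i + 1))) *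
      ∑' k : ℕ, ENNReal.ofReal (w (i + 1 + k))) i
  have hsum : Summable w := by
    have h0 := lt_of_le_of_lt (hterm 0) (lt_top_iff_ne_top.2 hU)
    have ha : ENNReal.ofReal (1 / ((((0:ℕ) : ℝ) + 1) * w (0 + 1))) ≠ 0 := by
      apply ne_of_gt
      apply ENNReal.ofReal_pos.2
      have := hw 1
      simp only [Nat.cast_zero, zero_add, one_mul]
      positivity
    have hs : (∑' k : ℕ, ENNReal.ofReal (w (0 + 1 + k))) ≠ ⊤ := by
      intro h
      rw [h, ENNReal.mul_top ha] at h0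
      exact absurd h0 (lt_irrefl ⊤)
    have hsum1 : Summable (fun k => w (0 + 1 + k)) := by
      have h := ENNReal.summable_toReal hs
      simpa [ENNReal.toReal_ofReal (hw _).le] using h
    have : Summable (fun k => w (k + 1)) := by
      simpa [add_comm] using hsum1
    exact (summable_nat_add_iff 1).1 this
  set U : ℝ := (Uw w).toReal + 1 with hUdef
  have hU1 : 1 ≤ U := by
    have := ENNReal.toReal_nonneg (a := Uw w)
    linarith
  have hS : ∀ j, 1 ≤ j → Sw w j ≤ U * (j * w j) := by
    intro j hj
    obtain ⟨i, rfl⟩ : ∃ i, j = i + 1 := ⟨j - 1, by omega⟩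
    have h := hterm i
    have hsum' : Summable (fun k => w (i + 1 + k)) := summable_shift hsum (i + 1)
    have heq : (∑' k : ℕ, ENNReal.ofReal (w (i + 1 + k))) = ENNReal.ofReal (Sw w (i + 1)) :=
      (ENNReal.ofReal_tsum_of_nonneg (fun _ => (hw _).le) hsum').symm
    have hpos : (0:ℝ) < ((i : ℝ) + 1) * w (i + 1) := by
      have := hw (i + 1)
      positivity
    rw [heq, ← ENNReal.ofReal_mul (by positivity)] at h
    have hSnn := Sw_nonneg hw (i + 1)
    have h2 := ENNReal.toReal_mono hU h
    rw [ENNReal.toReal_ofReal (mul_nonneg (by positivity) hSnn)] at h2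
    have h3 : Sw w (i + 1) ≤ (Uw w).toReal * (((i : ℝ) + 1) * w (i + 1)) := by
      rw [div_mul_eq_mul_div, one_mul, div_le_iff₀ hpos] at h2
      linarith
    have hcast : ((i + 1 : ℕ) : ℝ) = (i : ℝ) + 1 := by push_cast; ring
    rw [hcast]
    nlinarith
  set P : ellOne →L[ℂ] ellOne := Pop hw hsum with hPdef
  set q : ℝ := U / (U + 1) with hqdef
  have hq0 : 0 ≤ q := by positivity
  have hq1 : q < 1 := by
    rw [hqdef, div_lt_one (by linarith)]
    linarith
  set C : ℝ := (1 + U) * (1 + ‖P‖) with hCdef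
  have hC0 : 0 ≤ C := by
    have := norm_nonneg P
    have : (0:ℝ) ≤ 1 + ‖P‖ := by linarith
    have h1U : (0:ℝ) ≤ 1 + U := by linarith
    positivity
  have hdecay : ∀ m : ℕ, ‖T ^ m - P‖ ≤ C * q ^ m :=
    fun m => pow_sub_Pop_norm hw hsum hU1 hS T hT m
  constructor
  · refine ⟨C + ‖P‖, fun m _ => ?_⟩
    calc ‖T ^ m‖ = ‖(T ^ m - P) + P‖ := by rw [sub_add_cancel]
      _ ≤ ‖T ^ m - P‖ + ‖P‖ := norm_add_le _ _
      _ ≤ C * q ^ m + ‖P‖ := by have := hdecay m; linarith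
      _ ≤ C + ‖P‖ := by
          have hqm : q ^ m ≤ 1 := pow_le_one₀ hq0 hq1.le
          nlinarith
  · refine ⟨P, ?_⟩
    rw [tendsto_iff_norm_sub_tendsto_zero]
    apply squeeze_zero' (Eventually.of_forall fun n => norm_nonneg _) ?_
      (tendsto_const_div_atTop_nhds_zero_nat (C * (1 - q)⁻¹))
    filter_upwards [eventually_ge_atTop 1] with n hn
    have hnne : ((n : ℕ) : ℂ) ≠ 0 := Nat.cast_ne_zero.2 (by omega)
    have hsplit : ((n : ℂ))⁻¹ • ∑ m ∈ Finset.Icc 1 n, T ^ m - P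
        = ((n : ℂ))⁻¹ • ∑ m ∈ Finset.Icc 1 n, (T ^ m - P) := by
      rw [Finset.sum_sub_distrib, smul_sub]
      congr 1
      rw [Finset.sum_const, Nat.card_Icc]
      simp only [Nat.add_sub_cancel]
      rw [← Nat.cast_smul_eq_nsmul ℂ, smul_smul, inv_mul_cancel₀ hnne, one_smul]
    rw [hsplit]
    have hgeom : ∑ m ∈ Finset.Icc 1 n, q ^ m ≤ (1 - q)⁻¹ := by
      have hle : ∑ m ∈ Finset.Icc 1 n, q ^ m ≤ ∑' m : ℕ, q ^ m :=
        Summable.sum_le_tsum _ (fun i _ => pow_nonneg hq0 i) (summable_geometric_of_lt_one hq0 hq1)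
      rwa [tsum_geometric_of_lt_one hq0 hq1] at hle
    calc ‖((n : ℂ))⁻¹ • ∑ m ∈ Finset.Icc 1 n, (T ^ m - P)‖
        = ‖((n : ℂ))⁻¹‖ * ‖∑ m ∈ Finset.Icc 1 n, (T ^ m - P)‖ :=
          norm_smul ((n : ℂ))⁻¹ (∑ m ∈ Finset.Icc 1 n, (T ^ m - P))
      _ ≤ ((n : ℝ))⁻¹ * (C * (1 - q)⁻¹) := by
          have h1 : ‖((n : ℂ))⁻¹‖ = ((n : ℝ))⁻¹ := by
            rw [norm_inv, Complex.norm_natCast]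
          rw [h1]
          apply mul_le_mul_of_nonneg_left _ (by positivity)
          calc ‖∑ m ∈ Finset.Icc 1 n, (T ^ m - P)‖
              ≤ ∑ m ∈ Finset.Icc 1 n, ‖T ^ m - P‖ := norm_sum_le _ _
            _ ≤ ∑ m ∈ Finset.Icc 1 n, C * q ^ m :=
                Finset.sum_le_sum fun m _ => hdecay m
            _ = C * ∑ m ∈ Finset.Icc 1 n, q ^ m := by rw [Finset.mul_sum]
            _ ≤ C * (1 - q)⁻¹ := by
                apply mul_le_mul_of_nonneg_left hgeom hC0
      _ = C * (1 - q)⁻¹ / (n : ℝ) := by rw [inv_mul_eq_div]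
end
end
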